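/- If K, L ∈ S(ℝ^d × ℝ^d), then their kernel composition (K ◇ L)(x,y) := (2π)^{-d/2} ∫_{ℝ^d} K(x,z) L(z,y) dz is again a Schwartz function on ℝ^d × ℝ^d. -/

import Mathlib

open MeasureTheory Complex

noncomputable section

abbrev E (d : ℕ) := EuclideanSpace ℝ (Fin d)

/-- The kernel composition `(K ◇ L)(x,y) = (2π)^{-d/2} ∫ K(x,z) L(z,y) dz`. -/
def kernelComp {d : ℕ} (K L : E d × E d → ℂ) (x y : E d) : ℂ :=
  ((((2 * Real.pi) ^ ((d : ℝ) / 2))⁻¹ : ℝ) : ℂ) *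
    ∫ z : E d, K (x, z) * L (z, y)

open SchwartzMap ContinuousLinearMap Module

namespace KernelCompAux

variable {D F G : Type*} [NormedAddCommGroup D] [NormedSpace ℝ D]
  [NormedAddCommGroup F] [NormedSpace ℝ F]
  [NormedAddCommGroup G] [NormedSpace ℝ G]

/-- Postcomposition of a Schwartz map with a continuous linear map. -/
def postcomp (σ : F →L[ℝ] G) (f : 𝓢(D, F)) : 𝓢(D, G) where
  toFun := fun x => σ (f x)
  smooth' := σ.contDiff.comp (f.smooth ⊤)
  decay' := by
    intro k n
    obtain ⟨C, hC⟩ := f.decay' k n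
    refine ⟨‖σ‖ * C, fun x => ?_⟩
    have h1 : iteratedFDeriv ℝ n (fun x => σ (f x)) x
        = σ.compContinuousMultilinearMap (iteratedFDeriv ℝ n f x) :=
      σ.iteratedFDeriv_comp_left (f.smooth ⊤).contDiffAt (mod_cast le_top)
    calc ‖x‖ ^ k * ‖iteratedFDeriv ℝ n (fun x => σ (f x)) x‖
        ≤ ‖x‖ ^ k * (‖σ‖ * ‖iteratedFDeriv ℝ n f x‖) := by
          rw [h1]
          gcongr
          exact σ.norm_compContinuousMultilinearMap_le _
      _ = ‖σ‖ * (‖x‖ ^ k * ‖iteratedFDeriv ℝ n f x‖) := by ring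
      _ ≤ ‖σ‖ * C := mul_le_mul_of_nonneg_left (hC x) (norm_nonneg σ)

lemma hasTemperateGrowth_mk (x : D) {V : Type*} [NormedAddCommGroup V] [NormedSpace ℝ V] :
    Function.HasTemperateGrowth (fun z : V => ((x, z) : D × V)) := by
  have hd : ∀ z : V, HasFDerivAt (fun z : V => ((x, z) : D × V))
      ((0 : V →L[ℝ] D).prod (ContinuousLinearMap.id ℝ V)) z :=
    fun z => (hasFDerivAt_const x z).prodMk (hasFDerivAt_id z)
  refine Function.HasTemperateGrowth.of_fderiv ?_ (fun z => (hd z).differentiableAt)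
    (k := 1) (C := ‖x‖ + 1) (fun z => ?_)
  · have : (fderiv ℝ (fun z : V => ((x, z) : D × V)))
        = fun _ => (0 : V →L[ℝ] D).prod (ContinuousLinearMap.id ℝ V) :=
      funext fun z => (hd z).fderiv
    rw [this]
    exact .const _
  · have h1 : ‖((x, z) : D × V)‖ ≤ ‖x‖ + ‖z‖ := by
      rw [Prod.norm_def]
      exact max_le (by simp [le_add_of_nonneg_right, norm_nonneg]) (by simp [norm_nonneg])
    have : (0:ℝ) ≤ ‖x‖ := norm_nonneg x
    have : (0:ℝ) ≤ ‖z‖ := norm_nonneg z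
    nlinarith

/-- The slice of a Schwartz map in the second variable. -/
def slice {V : Type*} [NormedAddCommGroup V] [NormedSpace ℝ V]
    (f : 𝓢(D × V, F)) (x : D) : 𝓢(V, F) :=
  compCLM (𝕜 := ℝ) (hasTemperateGrowth_mk x)
    ⟨1, 1, fun z => by
      simpa using (norm_snd_le ((x, z) : D × V)).trans (by simp [norm_nonneg])⟩ f

@[simp] lemma slice_apply {V : Type*} [NormedAddCommGroup V] [NormedSpace ℝ V]
    (f : 𝓢(D × V, F)) (x : D) (z : V) : slice f x z = f (x, z) := rfl

end KernelCompAux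

namespace KernelCompAux
open Filter

variable {D F G : Type} [NormedAddCommGroup D] [NormedSpace ℝ D]
  [NormedAddCommGroup F] [NormedSpace ℝ F]
  [NormedAddCommGroup G] [NormedSpace ℝ G]

variable {d : ℕ}

local notation "V" => EuclideanSpace ℝ (Fin d)

/-- Partial Fréchet derivative in the first variable, as a Schwartz map. -/
def pfst (f : 𝓢(D × V, F)) : 𝓢(D × V, D →L[ℝ] F) :=
  postcomp ((ContinuousLinearMap.compL ℝ D (D × V) F).flip (ContinuousLinearMap.inl ℝ D V))
    (fderivCLM ℝ (D × V) F f)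

lemma pfst_apply (f : 𝓢(D × V, F)) (p : D × V) :
    pfst f p = (fderiv ℝ f p).comp (ContinuousLinearMap.inl ℝ D V) := rfl

/-- A uniform decay bound with the decay only in the second variable. -/
lemma decay_aux (g : 𝓢(D × V, G)) (k : ℕ) : ∃ C : ℝ, 0 ≤ C ∧ ∀ (x : D) (z : V),
    ‖x‖ ^ k * ‖g (x, z)‖ ≤ C * ((1 + ‖z‖) ^ (Module.finrank ℝ V + 1))⁻¹ := by
  set m := Module.finrank ℝ V + 1 with hm
  refine ⟨2 ^ (k + m) * ((Finset.Iic (k + m, 0)).sup (schwartzSeminormFamily ℝ (D × V) G)) g,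
    by positivity, fun x z => ?_⟩
  have key := one_add_le_sup_seminorm_apply (𝕜 := ℝ) (m := (k + m, 0)) le_rfl le_rfl g (x, z)
  rw [norm_iteratedFDeriv_zero] at key
  have hpos : (0:ℝ) < (1 + ‖z‖) ^ m := by positivity
  rw [← div_eq_mul_inv, le_div_iff₀ hpos]
  have hx : ‖x‖ ≤ 1 + ‖((x, z) : D × V)‖ :=
    (norm_fst_le ((x, z) : D × V)).trans (by linarith [norm_nonneg ((x, z) : D × V)])
  have hz : 1 + ‖z‖ ≤ 1 + ‖((x, z) : D × V)‖ := by
    have := norm_snd_le ((x, z) : D × V)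
    simpa using this
  calc ‖x‖ ^ k * ‖g (x, z)‖ * (1 + ‖z‖) ^ m
      ≤ ((1 + ‖((x, z) : D × V)‖) ^ k * ‖g (x, z)‖) * (1 + ‖((x, z) : D × V)‖) ^ m :=
        mul_le_mul
          (mul_le_mul (pow_le_pow_left₀ (norm_nonneg x) hx k) le_rfl (norm_nonneg _)
            (by positivity))
          (pow_le_pow_left₀ (by positivity) hz m) (by positivity) (by positivity)
    _ = (1 + ‖((x, z) : D × V)‖) ^ (k + m) * ‖g (x, z)‖ := by rw [pow_add]; ring
    _ ≤ 2 ^ (k + m) * ((Finset.Iic (k + m, 0)).sup (schwartzSeminormFamily ℝ (D × V) G)) g :=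
        key

lemma integrable_bound :
    Integrable (fun z : V => (((1 + ‖z‖) ^ (Module.finrank ℝ V + 1) : ℝ))⁻¹) := by
  have h : ((Module.finrank ℝ V : ℝ)) < ((Module.finrank ℝ V + 1 : ℕ) : ℝ) := by
    push_cast; linarith
  have := integrable_one_add_norm (E := V) (μ := volume) h
  refine this.congr (Eventually.of_forall fun z => ?_)
  show (1 + ‖z‖) ^ (-((Module.finrank ℝ V + 1 : ℕ) : ℝ))
      = (((1 + ‖z‖) ^ (Module.finrank ℝ V + 1) : ℝ))⁻¹
  rw [Real.rpow_neg (by positivity), Real.rpow_natCast]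

variable [CompleteSpace F]

/-- Differentiation under the integral sign for Schwartz kernels. -/
lemma hasFDerivAt_partialIntegral (f : 𝓢(D × V, F)) (x₀ : D) :
    HasFDerivAt (fun x : D => ∫ z : V, f (x, z)) (∫ z : V, pfst f (x₀, z)) x₀ := by
  haveI : SecondCountableTopologyEither V (D →L[ℝ] F) := ⟨Or.inl inferInstance⟩
  obtain ⟨C, hC0, hC⟩ := decay_aux (pfst f) 0
  simp only [pow_zero, one_mul] at hC
  have h1 : ∀ᶠ x in nhds x₀, AEStronglyMeasurable (fun z : V => f (x, z)) volume :=
    Eventually.of_forall fun x =>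
      ((slice f x).continuous.aestronglyMeasurable).congr (Eventually.of_forall fun z => rfl)
  have h2 : Integrable (fun z : V => f (x₀, z)) volume :=
    ((slice f x₀).integrable).congr (Eventually.of_forall fun z => rfl)
  have h3 : AEStronglyMeasurable (fun z : V => pfst f (x₀, z)) volume :=
    ((slice (pfst f) x₀).continuous.aestronglyMeasurable).congr
      (Eventually.of_forall fun z => rfl)
  have h4 : ∀ᵐ z : V ∂volume, ∀ x ∈ Metric.ball x₀ 1,
      ‖pfst f (x, z)‖ ≤ C * ((1 + ‖z‖) ^ (Module.finrank ℝ V + 1))⁻¹ :=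
    Eventually.of_forall fun z x _ => hC x z
  have h5 : Integrable (fun z : V => C * ((1 + ‖z‖) ^ (Module.finrank ℝ V + 1))⁻¹) volume :=
    (integrable_bound (d := d)).const_mul C
  have h6 : ∀ᵐ z : V ∂volume, ∀ x ∈ Metric.ball x₀ 1,
      HasFDerivAt (fun x : D => f (x, z)) (pfst f (x, z)) x := by
    refine Eventually.of_forall fun z x _ => ?_
    have hA : HasFDerivAt (fun x : D => ((x, z) : D × V))
        ((ContinuousLinearMap.id ℝ D).prod (0 : D →L[ℝ] V)) x :=
      (hasFDerivAt_id x).prodMk (hasFDerivAt_const z x)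
    have hB : HasFDerivAt f (fderiv ℝ f (x, z)) (x, z) := f.differentiableAt.hasFDerivAt
    have hAB := hB.comp x hA
    have h4' : (ContinuousLinearMap.id ℝ D).prod (0 : D →L[ℝ] V)
        = ContinuousLinearMap.inl ℝ D V := by ext v <;> simp
    rw [pfst_apply, ← h4']
    exact hAB
  exact hasFDerivAt_integral_of_dominated_of_fderiv_le (Metric.ball_mem_nhds x₀ one_pos) h1 h2 h3 h4 h5 h6

lemma fderiv_partialIntegral (f : 𝓢(D × V, F)) :
    fderiv ℝ (fun x : D => ∫ z : V, f (x, z)) = fun x => ∫ z : V, pfst f (x, z) :=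
  funext fun x => (hasFDerivAt_partialIntegral f x).fderiv

lemma contDiff_partialIntegral (n : ℕ) :
    ∀ {F : Type} [NormedAddCommGroup F] [NormedSpace ℝ F] [CompleteSpace F]
      (f : 𝓢(D × V, F)), ContDiff ℝ n (fun x : D => ∫ z : V, f (x, z)) := by
  induction n with
  | zero =>
    intro F _ _ _ f
    rw [show ((0 : ℕ) : WithTop ℕ∞) = 0 by norm_cast, contDiff_zero]
    exact continuous_iff_continuousAt.2 fun x =>
      (hasFDerivAt_partialIntegral f x).continuousAt
  | succ n IH =>
    intro F _ _ _ f
    rw [show ((n + 1 : ℕ) : WithTop ℕ∞) = (n : WithTop ℕ∞) + 1 by norm_cast]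
    refine contDiff_succ_iff_fderiv.2
      ⟨fun x => (hasFDerivAt_partialIntegral f x).differentiableAt, by simp, ?_⟩
    rw [fderiv_partialIntegral f]
    exact IH (pfst f)

lemma decay_partialIntegral (n : ℕ) :
    ∀ {F : Type} [NormedAddCommGroup F] [NormedSpace ℝ F] [CompleteSpace F]
      (f : 𝓢(D × V, F)) (k : ℕ), ∃ C : ℝ, ∀ x : D,
      ‖x‖ ^ k * ‖iteratedFDeriv ℝ n (fun x : D => ∫ z : V, f (x, z)) x‖ ≤ C := by
  induction n with
  | zero =>
    intro F _ _ _ f k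
    obtain ⟨C, hC0, hC⟩ := decay_aux f k
    refine ⟨C * ∫ z : V, ((1 + ‖z‖) ^ (Module.finrank ℝ V + 1))⁻¹, fun x => ?_⟩
    rw [norm_iteratedFDeriv_zero]
    have hint : Integrable (fun z : V => ‖x‖ ^ k * ‖f (x, z)‖) volume := by
      refine (((slice f x).integrable).norm.const_mul _).congr
        (Eventually.of_forall fun z => rfl)
    calc ‖x‖ ^ k * ‖∫ z : V, f (x, z)‖
        ≤ ‖x‖ ^ k * ∫ z : V, ‖f (x, z)‖ := by
          gcongr
          exact norm_integral_le_integral_norm _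
      _ = ∫ z : V, ‖x‖ ^ k * ‖f (x, z)‖ := (integral_const_mul _ _).symm
      _ ≤ ∫ z : V, C * ((1 + ‖z‖) ^ (Module.finrank ℝ V + 1))⁻¹ :=
          integral_mono hint ((integrable_bound (d := d)).const_mul C) fun z => hC x z
      _ = C * ∫ z : V, ((1 + ‖z‖) ^ (Module.finrank ℝ V + 1))⁻¹ := integral_const_mul _ _
  | succ n IH =>
    intro F _ _ _ f k
    obtain ⟨C, hC⟩ := IH (pfst f) k
    refine ⟨C, fun x => ?_⟩
    have h1 : ‖iteratedFDeriv ℝ (n + 1) (fun x : D => ∫ z : V, f (x, z)) x‖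
        = ‖iteratedFDeriv ℝ n (fderiv ℝ (fun x : D => ∫ z : V, f (x, z))) x‖ :=
      norm_iteratedFDeriv_fderiv.symm
    rw [h1, fderiv_partialIntegral f]
    exact hC x

/-- Integration in the second variable of a Schwartz kernel yields a Schwartz map. -/
def partialIntegral (f : 𝓢(D × V, F)) : 𝓢(D, F) where
  toFun := fun x => ∫ z : V, f (x, z)
  smooth' := contDiff_infty.2 fun n => contDiff_partialIntegral n f
  decay' := fun k n => decay_partialIntegral n f k

@[simp] lemma partialIntegral_apply (f : 𝓢(D × V, F)) (x : D) :
    partialIntegral f x = ∫ z : V, f (x, z) := rfl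

end KernelCompAux

namespace KernelCompAux

variable {d : ℕ}

local notation "V" => EuclideanSpace ℝ (Fin d)
local notation "P" => (EuclideanSpace ℝ (Fin d)) × (EuclideanSpace ℝ (Fin d))

/-- The first projection-pair map `((x,y),z) ↦ (x,z)`. -/
def Amap (d : ℕ) : (P × V) →L[ℝ] P :=
  ((ContinuousLinearMap.fst ℝ V V).comp (ContinuousLinearMap.fst ℝ P V)).prod
    (ContinuousLinearMap.snd ℝ P V)

/-- The second projection-pair map `((x,y),z) ↦ (z,y)`. -/
def Bmap (d : ℕ) : (P × V) →L[ℝ] P :=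
  (ContinuousLinearMap.snd ℝ P V).prod
    ((ContinuousLinearMap.snd ℝ V V).comp (ContinuousLinearMap.fst ℝ P V))

lemma Amap_apply (w : P × V) : Amap d w = (w.1.1, w.2) := rfl
lemma Bmap_apply (w : P × V) : Bmap d w = (w.2, w.1.2) := rfl

lemma norm_Amap_apply_le (w : P × V) : ‖Amap d w‖ ≤ ‖w‖ := by
  rw [Amap_apply, Prod.norm_def]
  exact max_le ((norm_fst_le w.1).trans (norm_fst_le w)) (norm_snd_le w)

lemma norm_Bmap_apply_le (w : P × V) : ‖Bmap d w‖ ≤ ‖w‖ := by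
  rw [Bmap_apply, Prod.norm_def]
  exact max_le (norm_snd_le w) ((norm_snd_le w.1).trans (norm_fst_le w))

lemma norm_w_le (w : P × V) : ‖w‖ ≤ (1 + ‖Amap d w‖) * (1 + ‖Bmap d w‖) := by
  have h1 : ‖w‖ ≤ ‖Amap d w‖ + ‖Bmap d w‖ := by
    rw [Amap_apply, Bmap_apply, Prod.norm_def, Prod.norm_def, Prod.norm_def, Prod.norm_def]
    refine max_le (max_le ?_ ?_) ?_
    · exact le_max_left _ _ |>.trans (le_add_of_nonneg_right (by positivity))
    · refine le_trans (le_max_right ‖w.2‖ ‖w.1.2‖) ?_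
      exact le_add_of_nonneg_left (by positivity)
    · exact (le_max_right ‖w.1.1‖ ‖w.2‖).trans (le_add_of_nonneg_right (by positivity))
  have hA : (0:ℝ) ≤ ‖Amap d w‖ := norm_nonneg _
  have hB : (0:ℝ) ≤ ‖Bmap d w‖ := norm_nonneg _
  nlinarith

/-- The integrand of the kernel composition, as a Schwartz function on the triple space. -/
def prodKernel (K L : 𝓢(P, ℂ)) : 𝓢(P × V, ℂ) where
  toFun := fun w => K (Amap d w) * L (Bmap d w)
  smooth' := ((K.smooth ⊤).comp (Amap d).contDiff).mul ((L.smooth ⊤).comp (Bmap d).contDiff)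
  decay' := by
    intro k n
    set SK := (2:ℝ) ^ k * ((Finset.Iic (k, n)).sup (schwartzSeminormFamily ℝ P ℂ)) K with hSK
    set SL := (2:ℝ) ^ k * ((Finset.Iic (k, n)).sup (schwartzSeminormFamily ℝ P ℂ)) L with hSL
    have hSK0 : 0 ≤ SK := mul_nonneg (by positivity) (apply_nonneg _ _)
    have hSL0 : 0 ≤ SL := mul_nonneg (by positivity) (apply_nonneg _ _)
    refine ⟨2 ^ n * SK * SL, fun w => ?_⟩
    -- norms of derivatives of the composed factors
    have hAop : ‖Amap d‖ ≤ 1 :=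
      ContinuousLinearMap.opNorm_le_bound _ zero_le_one fun w => by
        rw [one_mul]; exact norm_Amap_apply_le w
    have hBop : ‖Bmap d‖ ≤ 1 :=
      ContinuousLinearMap.opNorm_le_bound _ zero_le_one fun w => by
        rw [one_mul]; exact norm_Bmap_apply_le w
    have hKA : ∀ i : ℕ, ‖iteratedFDeriv ℝ i (⇑K ∘ ⇑(Amap d)) w‖
        ≤ ‖iteratedFDeriv ℝ i K (Amap d w)‖ := by
      intro i
      rw [(Amap d).iteratedFDeriv_comp_right (K.smooth ⊤) w (mod_cast le_top)]
      refine le_trans (ContinuousMultilinearMap.norm_compContinuousLinearMap_le _ _) ?_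
      calc ‖iteratedFDeriv ℝ i K (Amap d w)‖ * ∏ _j : Fin i, ‖Amap d‖
          ≤ ‖iteratedFDeriv ℝ i K (Amap d w)‖ * 1 := by
            gcongr
            exact Finset.prod_le_one (fun _ _ => norm_nonneg _) (fun _ _ => hAop)
        _ = _ := mul_one _
    have hLB : ∀ i : ℕ, ‖iteratedFDeriv ℝ i (⇑L ∘ ⇑(Bmap d)) w‖
        ≤ ‖iteratedFDeriv ℝ i L (Bmap d w)‖ := by
      intro i
      rw [(Bmap d).iteratedFDeriv_comp_right (L.smooth ⊤) w (mod_cast le_top)]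
      refine le_trans (ContinuousMultilinearMap.norm_compContinuousLinearMap_le _ _) ?_
      calc ‖iteratedFDeriv ℝ i L (Bmap d w)‖ * ∏ _j : Fin i, ‖Bmap d‖
          ≤ ‖iteratedFDeriv ℝ i L (Bmap d w)‖ * 1 := by
            gcongr
            exact Finset.prod_le_one (fun _ _ => norm_nonneg _) (fun _ _ => hBop)
        _ = _ := mul_one _
    have hmul := norm_iteratedFDeriv_mul_le (𝕜 := ℝ)
      ((K.smooth ⊤).comp (Amap d).contDiff) ((L.smooth ⊤).comp (Bmap d).contDiff) w
      (n := n) (mod_cast le_top)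
    have hw : ‖w‖ ^ k ≤ (1 + ‖Amap d w‖) ^ k * (1 + ‖Bmap d w‖) ^ k := by
      rw [← mul_pow]
      exact pow_le_pow_left₀ (norm_nonneg w) (norm_w_le w) k
    calc ‖w‖ ^ k * ‖iteratedFDeriv ℝ n (fun w => K (Amap d w) * L (Bmap d w)) w‖
        ≤ ((1 + ‖Amap d w‖) ^ k * (1 + ‖Bmap d w‖) ^ k) *
            ∑ i ∈ Finset.range (n + 1), (n.choose i : ℝ) *
              ‖iteratedFDeriv ℝ i (⇑K ∘ ⇑(Amap d)) w‖ *
              ‖iteratedFDeriv ℝ (n - i) (⇑L ∘ ⇑(Bmap d)) w‖ :=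
          mul_le_mul hw hmul (norm_nonneg _) (by positivity)
      _ = ∑ i ∈ Finset.range (n + 1), (n.choose i : ℝ) *
            ((1 + ‖Amap d w‖) ^ k * ‖iteratedFDeriv ℝ i (⇑K ∘ ⇑(Amap d)) w‖) *
            ((1 + ‖Bmap d w‖) ^ k * ‖iteratedFDeriv ℝ (n - i) (⇑L ∘ ⇑(Bmap d)) w‖) := by
          rw [Finset.mul_sum]
          exact Finset.sum_congr rfl fun i _ => by ring
      _ ≤ ∑ i ∈ Finset.range (n + 1), (n.choose i : ℝ) * SK * SL := by
          refine Finset.sum_le_sum fun i hi => ?_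
          have hin : i ≤ n := Nat.lt_succ_iff.mp (Finset.mem_range.mp hi)
          have e1 : (1 + ‖Amap d w‖) ^ k * ‖iteratedFDeriv ℝ i (⇑K ∘ ⇑(Amap d)) w‖ ≤ SK := by
            refine le_trans (mul_le_mul_of_nonneg_left (hKA i) (by positivity)) ?_
            exact one_add_le_sup_seminorm_apply (𝕜 := ℝ) (m := (k, n)) le_rfl hin K (Amap d w)
          have e2 : (1 + ‖Bmap d w‖) ^ k
              * ‖iteratedFDeriv ℝ (n - i) (⇑L ∘ ⇑(Bmap d)) w‖ ≤ SL := by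
            refine le_trans (mul_le_mul_of_nonneg_left (hLB (n - i)) (by positivity)) ?_
            exact one_add_le_sup_seminorm_apply (𝕜 := ℝ) (m := (k, n)) le_rfl (Nat.sub_le n i)
              L (Bmap d w)
          have h1 : (0:ℝ) ≤ (1 + ‖Amap d w‖) ^ k
              * ‖iteratedFDeriv ℝ i (⇑K ∘ ⇑(Amap d)) w‖ := by positivity
          refine mul_le_mul (mul_le_mul_of_nonneg_left e1 (by positivity)) e2 (by positivity) ?_
          positivity
      _ = 2 ^ n * SK * SL := by
          rw [← Finset.sum_mul, ← Finset.sum_mul, ← Nat.cast_sum, Nat.sum_range_choose]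
          push_cast
          ring

end KernelCompAux


/-- Schwartz kernels are closed under kernel composition. -/
theorem kernelComp_schwartz (d : ℕ) (K L : SchwartzMap (E d × E d) ℂ) :
    ∃ M : SchwartzMap (E d × E d) ℂ, ∀ x y : E d, M (x, y) = kernelComp (⇑K) (⇑L) x y := by
  refine ⟨((((2 * Real.pi) ^ ((d : ℝ) / 2))⁻¹ : ℝ) : ℂ) •
    KernelCompAux.partialIntegral (KernelCompAux.prodKernel K L), fun x y => ?_⟩
  rw [SchwartzMap.smul_apply, smul_eq_mul]
  rfl
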